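/- arXiv:2212.12958 — 2 statements merged into one kernel-verified Lean document; each statement's English description precedes it below -/
import Mathlib

section
/- Let G be a topological group and q : Γ → G a map from a group Γ with q(x⁻¹) = q(x)⁻¹ for all x. If there is a compact set K ⊆ G with q(xy) ∈ K · q(x) · q(y) for all x, y ∈ Γ, then there is a compact set K' ⊆ G with q(xy) ∈ q(x) · q(y) · K' for all x, y ∈ Γ. -/
/-- If `q : Γ → G` is symmetric (`q(x⁻¹) = q(x)⁻¹`) and satisfies
`q(xy) ∈ K · q(x) · q(y)` for a compact `K`, then there is a compact `K'` with
`q(xy) ∈ q(x) · q(y) · K'` for all `x, y`. -/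
theorem ulam_left_defect_iff_right_defect {Γ G : Type*} [Group Γ] [Group G]
    [TopologicalSpace G] [IsTopologicalGroup G]
    (q : Γ → G) (hsym : ∀ x, q x⁻¹ = (q x)⁻¹)
    (K : Set G) (hK : IsCompact K)
    (h : ∀ x y : Γ, ∃ k ∈ K, q (x * y) = k * q x * q y) :
    ∃ K' : Set G, IsCompact K' ∧ ∀ x y : Γ, ∃ k ∈ K', q (x * y) = q x * q y * k := by
  refine ⟨K⁻¹, hK.inv, fun x y => ?_⟩
  obtain ⟨k, hk, hkeq⟩ := h y⁻¹ x⁻¹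
  refine ⟨k⁻¹, Set.inv_mem_inv.mpr hk, ?_⟩
  have : q (x * y) = (q (y⁻¹ * x⁻¹))⁻¹ := by
    rw [← hsym]; simp [mul_inv_rev]
  rw [this, hkeq, hsym, hsym]
  group
end

section
/- Let W₁, W₂ be nonempty reduced words in the free group F₂ such that W₁ is not a subword of W₂ⁱ for any i ∈ ℤ. Then the homogenization of the Brooks quasimorphism associated with W₁ vanishes on W₂: q₁(W₂) = 0. -/
open Filter

/-- Number of occurrences of `w` as a contiguous subword of `v`. -/
def subwordCount (w v : List (Fin 2 × Bool)) : ℕ :=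
  (List.range (v.length + 1)).countP (fun i => decide (w <+: v.drop i))

/-- The Brooks counting function `h_W(g) = #(W in g) − #(W⁻¹ in g)`. -/
noncomputable def brooks (W : FreeGroup (Fin 2)) (g : FreeGroup (Fin 2)) : ℝ :=
  (subwordCount W.toWord g.toWord : ℝ) - (subwordCount W⁻¹.toWord g.toWord : ℝ)

lemma subwordCount_eq_zero {w v : List (Fin 2 × Bool)} (h : ¬ w <:+: v) :
    subwordCount w v = 0 := by
  unfold subwordCount
  rw [List.countP_eq_zero]
  intro i _
  simp only [decide_eq_true_eq]
  intro hp
  exact h (hp.isInfix.trans (List.drop_suffix i v).isInfix)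

lemma infix_invRev {a b : List (Fin 2 × Bool)} (h : a <:+: b) :
    FreeGroup.invRev a <:+: FreeGroup.invRev b := by
  obtain ⟨s, t, rfl⟩ := h
  exact ⟨FreeGroup.invRev t, FreeGroup.invRev s, by
    simp [FreeGroup.invRev, List.reverse_append, List.append_assoc]⟩

/-- If `W₁` is not a subword of any power `W₂ⁱ` (`i ∈ ℤ`), then the homogenization of
the Brooks quasimorphism of `W₁` vanishes on `W₂`. -/
theorem brooks_homogenization_vanishes (W₁ W₂ : FreeGroup (Fin 2))
    (hW₁ : W₁ ≠ 1) (hW₂ : W₂ ≠ 1)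
    (hsub : ∀ i : ℤ, ¬ W₁.toWord <:+: (W₂ ^ i).toWord) :
    Tendsto (fun n : ℕ => brooks W₁ (W₂ ^ n) / n) atTop (nhds 0) := by
  have key : ∀ n : ℕ, brooks W₁ (W₂ ^ n) = 0 := by
    intro n
    have h1 : subwordCount W₁.toWord (W₂ ^ n).toWord = 0 := by
      apply subwordCount_eq_zero
      have := hsub (n : ℤ)
      rwa [zpow_natCast] at this
    have h2 : subwordCount W₁⁻¹.toWord (W₂ ^ n).toWord = 0 := by
      apply subwordCount_eq_zero
      intro hinf
      have h3 := infix_invRev hinf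
      rw [FreeGroup.toWord_inv, FreeGroup.invRev_invRev,
        ← FreeGroup.toWord_inv] at h3
      have := hsub (-(n : ℤ))
      rw [zpow_neg, zpow_natCast] at this
      exact this h3
    unfold brooks; rw [h1, h2]; simp
  simp only [key, zero_div]
  exact tendsto_const_nhds
end
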